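/- arXiv:2002.11875 — 7 statements merged into one kernel-verified Lean document; each statement's English description precedes it below -/
import Mathlib

section
/- Let X ⊆ ℝ^n and Y ⊆ ℝ^m be nonempty, f : ℝ^n × ℝ^m → ℝ, x* ∈ X, y* ∈ Y, and ε₀ > 0. Suppose f(x*,y) ≤ f(x*,y*) for all y ∈ N(y*,ε₀) := {y ∈ Y : ‖y − y*‖ ≤ ε₀}. If for some 0 ≤ ε ≤ ε₀ there is δ > 0 such that f̄_{ε,y*}(x*) ≤ f̄_{ε,y*}(x) for all x ∈ X with ‖x − x*‖ ≤ δ, then for every set N with N(y*,ε) ⊆ N ⊆ N(y*,ε₀), the function f̄_N(x) := sup{ f(x,y) : y ∈ N } (supremum in the extended reals) satisfies f̄_N(x*) ≤ f̄_N(x) for all x ∈ X with ‖x − x*‖ ≤ δ; in particular x* is a local minimizer of f̄_N on X over the same neighborhood. -/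
open Filter

/-- Upper envelope of `f(·, y)` over a set `N` of `y`-values, in the extended reals. -/
noncomputable def envSet {n m : ℕ}
    (f : EuclideanSpace ℝ (Fin n) → EuclideanSpace ℝ (Fin m) → ℝ)
    (N : Set (EuclideanSpace ℝ (Fin m))) (x : EuclideanSpace ℝ (Fin n)) : EReal :=
  ⨆ y ∈ N, ((f x y : ℝ) : EReal)

/-- Local upper envelope `f̄_{ε,y*}` relative to `Y`, in the extended reals. -/
noncomputable def envU {n m : ℕ}
    (f : EuclideanSpace ℝ (Fin n) → EuclideanSpace ℝ (Fin m) → ℝ)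
    (Y : Set (EuclideanSpace ℝ (Fin m))) (ystar : EuclideanSpace ℝ (Fin m)) (ε : ℝ)
    (x : EuclideanSpace ℝ (Fin n)) : EReal :=
  envSet f {y ∈ Y | ‖y - ystar‖ ≤ ε} x

/-- If `y*` maximizes `f(x*, ·)` over `N(y*, ε₀)` and `x*` locally minimizes the
envelope `f̄_{ε,y*}` (for some `0 ≤ ε ≤ ε₀`) over `{x ∈ X : ‖x − x*‖ ≤ δ}`, then `x*`
remains a minimizer over the same neighborhood of the envelope `f̄_N` for any set `N`
with `N(y*,ε) ⊆ N ⊆ N(y*,ε₀)`. -/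
theorem envelope_minimizer_of_intermediate_set {n m : ℕ}
    (X : Set (EuclideanSpace ℝ (Fin n))) (Y : Set (EuclideanSpace ℝ (Fin m)))
    (hX : X.Nonempty) (hY : Y.Nonempty)
    (f : EuclideanSpace ℝ (Fin n) → EuclideanSpace ℝ (Fin m) → ℝ)
    (xstar : EuclideanSpace ℝ (Fin n)) (ystar : EuclideanSpace ℝ (Fin m))
    (hxX : xstar ∈ X) (hyY : ystar ∈ Y)
    (ε₀ : ℝ) (hε₀ : 0 < ε₀)
    (hmax : ∀ y ∈ Y, ‖y - ystar‖ ≤ ε₀ → f xstar y ≤ f xstar ystar)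
    (ε : ℝ) (hε0 : 0 ≤ ε) (hεε₀ : ε ≤ ε₀)
    (δ : ℝ) (hδ : 0 < δ)
    (hmin : ∀ x ∈ X, ‖x - xstar‖ ≤ δ → envU f Y ystar ε xstar ≤ envU f Y ystar ε x) :
    ∀ N : Set (EuclideanSpace ℝ (Fin m)),
      {y ∈ Y | ‖y - ystar‖ ≤ ε} ⊆ N → N ⊆ {y ∈ Y | ‖y - ystar‖ ≤ ε₀} →
      ∀ x ∈ X, ‖x - xstar‖ ≤ δ → envSet f N xstar ≤ envSet f N x := by
  intro N hNl hNu x hxXmem hxd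
  have hystarN : ystar ∈ {y ∈ Y | ‖y - ystar‖ ≤ ε} := by
    refine ⟨hyY, ?_⟩
    simp [hε0]
  -- envSet f N xstar ≤ f xstar ystar
  have h1 : envSet f N xstar ≤ ((f xstar ystar : ℝ) : EReal) := by
    refine iSup₂_le fun y hy => ?_
    obtain ⟨hyY', hyε₀⟩ := hNu hy
    exact_mod_cast EReal.coe_le_coe_iff.mpr (hmax y hyY' hyε₀)
  -- f xstar ystar ≤ envU f Y ystar ε xstar
  have h2 : ((f xstar ystar : ℝ) : EReal) ≤ envU f Y ystar ε xstar :=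
    le_iSup₂ (f := fun y _ => ((f xstar y : ℝ) : EReal)) ystar hystarN
  -- envU ≤ envSet over N (monotonicity)
  have h3 : envU f Y ystar ε x ≤ envSet f N x := by
    refine iSup₂_le fun y hy => ?_
    exact le_iSup₂ (f := fun y _ => ((f x y : ℝ) : EReal)) y (hNl hy)
  calc envSet f N xstar ≤ envU f Y ystar ε xstar := h1.trans h2
    _ ≤ envU f Y ystar ε x := hmin x hxXmem hxd
    _ ≤ envSet f N x := h3
end

section
/- Let q(x,y) = ½ xᵀA x + ½ yᵀB y + xᵀC y + aᵀx + bᵀy + c₀ be a quadratic game on ℝ^n × ℝ^m with A, B symmetric. Then the following are equivalent: (i) q has a global saddle point; (ii) q has a global minimax point and q has a global maximin point; (iii) A is positive semidefinite, B is negative semidefinite, and there exist x₀ ∈ ℝ^n, y₀ ∈ ℝ^m with A x₀ + C y₀ = a and Cᵀ x₀ + B y₀ = b. -/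
open Matrix


lemma dot_symm {ι κ : Type*} [Fintype ι] [Fintype κ] (M : Matrix ι κ ℝ) (u : ι → ℝ) (v : κ → ℝ) :
    u ⬝ᵥ (M *ᵥ v) = (Mᵀ *ᵥ u) ⬝ᵥ v := by
  rw [Matrix.dotProduct_mulVec, Matrix.mulVec_transpose]

lemma isHermitian_of_isSymm {ι : Type*} [Fintype ι] {M : Matrix ι ι ℝ} (hM : M.IsSymm) :
    M.IsHermitian := by
  ext i j
  simp only [Matrix.conjTranspose_apply, star_trivial]
  exact hM.apply i j

lemma scalar_key {α β : ℝ} (h : ∀ t : ℝ, 0 ≤ α / 2 * t ^ 2 + β * t) : 0 ≤ α ∧ β = 0 := by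
  constructor
  · nlinarith [h 1, h (-1)]
  · by_contra hb
    have hβ : 0 < β ^ 2 := by positivity
    set s := |α| + 2 with hs
    have hspos : 0 < s := by positivity
    have ht := h (-β / s)
    have e1 : α / 2 * (-β / s) ^ 2 + β * (-β / s) = β ^ 2 * (α / 2 - s) / s ^ 2 := by
      field_simp; ring
    rw [e1] at ht
    have h2 : α / 2 - s < 0 := by
      rcases abs_cases α with hc | hc
      · rw [hs]; nlinarith [hc.1]
      · rw [hs]; nlinarith [hc.1]
    have : β ^ 2 * (α / 2 - s) / s ^ 2 < 0 :=
      div_neg_of_neg_of_pos (mul_neg_of_pos_of_neg hβ h2) (by positivity)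
    linarith

/-- If `x ↦ ½ xᵀMx + dᵀx` has a global minimum at `z`, then `M ⪰ 0` and `Mz + d = 0`. -/
lemma quad_min {k : ℕ} {M : Matrix (Fin k) (Fin k) ℝ} (hM : M.IsSymm)
    {d z : Fin k → ℝ}
    (h : ∀ x : Fin k → ℝ, (1/2) * (z ⬝ᵥ (M *ᵥ z)) + d ⬝ᵥ z ≤ (1/2) * (x ⬝ᵥ (M *ᵥ x)) + d ⬝ᵥ x) :
    M.PosSemidef ∧ M *ᵥ z + d = 0 := by
  have key : ∀ u : Fin k → ℝ, 0 ≤ (u ⬝ᵥ (M *ᵥ u)) / 2 ∧ (M *ᵥ z + d) ⬝ᵥ u = 0 := by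
    intro u
    have hline : ∀ t : ℝ, 0 ≤ (u ⬝ᵥ (M *ᵥ u)) / 2 * t ^ 2 + ((M *ᵥ z + d) ⬝ᵥ u) * t := by
      intro t
      have hmain := h (z + t • u)
      simp only [Matrix.mulVec_add, Matrix.mulVec_smul, dotProduct_add,
        add_dotProduct, smul_dotProduct, dotProduct_smul,
        smul_eq_mul] at hmain ⊢
      have e1 : t * ((M *ᵥ z) ⬝ᵥ u) = t * (u ⬝ᵥ (M *ᵥ z)) := by rw [dotProduct_comm]
      have e2 : t * (u ⬝ᵥ (M *ᵥ z)) = t * (z ⬝ᵥ (M *ᵥ u)) := by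
        rw [dot_symm, hM.eq, dotProduct_comm]
      nlinarith [hmain, e1, e2]
    have hsk := scalar_key hline
    exact ⟨by linarith [hsk.1], hsk.2⟩
  refine ⟨PosSemidef.of_dotProduct_mulVec_nonneg (isHermitian_of_isSymm hM) ?_, ?_⟩
  · intro x
    have := (key x).1
    simpa using by linarith
  · funext i
    have := (key (Pi.single i 1)).2
    simpa using this

/-- Converse: if `M ⪰ 0` and `Mz + d = 0` then `z` is a global minimum. -/
lemma quad_min' {k : ℕ} {M : Matrix (Fin k) (Fin k) ℝ} (hM : M.IsSymm) (hP : M.PosSemidef)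
    {d z : Fin k → ℝ} (hz : M *ᵥ z + d = 0) :
    ∀ x : Fin k → ℝ, (1/2) * (z ⬝ᵥ (M *ᵥ z)) + d ⬝ᵥ z ≤ (1/2) * (x ⬝ᵥ (M *ᵥ x)) + d ⬝ᵥ x := by
  intro x
  have hq : 0 ≤ (x - z) ⬝ᵥ (M *ᵥ (x - z)) := by
    have := hP.dotProduct_mulVec_nonneg (x - z)
    simpa using this
  have hd : d = -(M *ᵥ z) := by
    funext i; have := congrFun hz i
    simp only [Pi.add_apply, Pi.zero_apply] at this
    simp only [Pi.neg_apply]; linarith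
  subst hd
  have e1 : (M *ᵥ z) ⬝ᵥ z = z ⬝ᵥ (M *ᵥ z) := dotProduct_comm _ _
  have e2 : (M *ᵥ z) ⬝ᵥ x = x ⬝ᵥ (M *ᵥ z) := dotProduct_comm _ _
  have e3 : x ⬝ᵥ (M *ᵥ z) = z ⬝ᵥ (M *ᵥ x) := by
    rw [dot_symm, hM.eq, dotProduct_comm]
  simp only [Matrix.mulVec_sub, dotProduct_sub, sub_dotProduct,
    neg_dotProduct, dotProduct_neg] at hq ⊢
  linarith [hq, e1, e2, e3]

/-- A symmetric real matrix hits every vector orthogonal to its kernel. -/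
lemma symm_range {ι : Type*} [Fintype ι] [DecidableEq ι] (M : Matrix ι ι ℝ) (hM : M.IsSymm)
    (d : ι → ℝ) (hd : ∀ u : ι → ℝ, M *ᵥ u = 0 → d ⬝ᵥ u = 0) : ∃ z : ι → ℝ, M *ᵥ z = d := by
  classical
  set T := Matrix.toEuclideanLin M with hT
  set K := LinearMap.range T with hK
  have hmem : ((WithLp.equiv 2 (ι → ℝ)).symm d) ∈ K := by
    rw [← Submodule.orthogonal_orthogonal K, Submodule.mem_orthogonal]
    intro u hu
    set u' : ι → ℝ := (WithLp.equiv 2 (ι → ℝ)) u with hu'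
    have h1 : inner ℝ (T (T u)) u = (0 : ℝ) :=
      (Submodule.mem_orthogonal K u).mp hu (T (T u)) (LinearMap.mem_range_self T (T u))
    have h2 : inner ℝ (T (T u)) u = (M *ᵥ (M *ᵥ u')) ⬝ᵥ u' := by
      rw [EuclideanSpace.inner_eq_star_dotProduct]
      simp only [star_trivial, hT, Matrix.ofLp_toEuclideanLin_apply]
      exact dotProduct_comm _ _
    have h3 : (M *ᵥ (M *ᵥ u')) ⬝ᵥ u' = (M *ᵥ u') ⬝ᵥ (M *ᵥ u') := by
      rw [dotProduct_comm, dot_symm, hM.eq]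
    have hMu : M *ᵥ u' = 0 := by
      have h4 : (M *ᵥ u') ⬝ᵥ (M *ᵥ u') = 0 := by rw [← h3, ← h2, h1]
      exact dotProduct_self_eq_zero.mp h4
    have hdu : d ⬝ᵥ u' = 0 := hd u' hMu
    have h5 : inner ℝ u ((WithLp.equiv 2 (ι → ℝ)).symm d) = u' ⬝ᵥ d := by
      rw [EuclideanSpace.inner_eq_star_dotProduct, dotProduct_comm]
      rfl
    rw [h5, dotProduct_comm]
    exact hdu
  obtain ⟨z, hz⟩ := hmem
  refine ⟨(WithLp.equiv 2 (ι → ℝ)) z, ?_⟩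
  have : (WithLp.equiv 2 (ι → ℝ)) (T z) = M *ᵥ (WithLp.equiv 2 (ι → ℝ)) z := rfl
  rw [← this, hz]
  rfl

/-- `(xs, ys)` is a global saddle point of `f` (unconstrained case). -/
def IsGlobalSaddle {n m : ℕ}
    (f : EuclideanSpace ℝ (Fin n) → EuclideanSpace ℝ (Fin m) → ℝ)
    (xs : EuclideanSpace ℝ (Fin n)) (ys : EuclideanSpace ℝ (Fin m)) : Prop :=
  (∀ y, f xs y ≤ f xs ys) ∧ (∀ x, f xs ys ≤ f x ys)

/-- `(xs, ys)` is a global minimax point of `f` (unconstrained case). -/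
def IsGlobalMinimax {n m : ℕ}
    (f : EuclideanSpace ℝ (Fin n) → EuclideanSpace ℝ (Fin m) → ℝ)
    (xs : EuclideanSpace ℝ (Fin n)) (ys : EuclideanSpace ℝ (Fin m)) : Prop :=
  (∀ y, f xs y ≤ f xs ys) ∧
  (∀ x, ∀ c : ℝ, (∀ y, f x y ≤ c) → f xs ys ≤ c)

/-- `(xs, ys)` is a global maximin point of `f` (unconstrained case). -/
def IsGlobalMaximin {n m : ℕ}
    (f : EuclideanSpace ℝ (Fin n) → EuclideanSpace ℝ (Fin m) → ℝ)
    (xs : EuclideanSpace ℝ (Fin n)) (ys : EuclideanSpace ℝ (Fin m)) : Prop :=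
  (∀ x, f xs ys ≤ f x ys) ∧
  (∀ y, ∀ c : ℝ, (∀ x, c ≤ f x y) → c ≤ f xs ys)

/-- A real matrix is negative semidefinite iff its negation is positive semidefinite. -/
def Matrix.NegSemidef' {m : ℕ} (M : Matrix (Fin m) (Fin m) ℝ) : Prop := (-M).PosSemidef

/-- The quadratic game `q(x,y) = ½ xᵀAx + ½ yᵀBy + xᵀCy + aᵀx + bᵀy + c₀`. -/
noncomputable def quadGame {n m : ℕ} (A : Matrix (Fin n) (Fin n) ℝ)
    (B : Matrix (Fin m) (Fin m) ℝ) (C : Matrix (Fin n) (Fin m) ℝ)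
    (a : Fin n → ℝ) (b : Fin m → ℝ) (c₀ : ℝ)
    (x : EuclideanSpace ℝ (Fin n)) (y : EuclideanSpace ℝ (Fin m)) : ℝ :=
  (1 / 2) * (x ⬝ᵥ (A *ᵥ x)) + (1 / 2) * (y ⬝ᵥ (B *ᵥ y)) + x ⬝ᵥ (C *ᵥ y) +
    a ⬝ᵥ x + b ⬝ᵥ y + c₀

section helpers

variable {n m : ℕ} {A : Matrix (Fin n) (Fin n) ℝ} {B : Matrix (Fin m) (Fin m) ℝ}
  {C : Matrix (Fin n) (Fin m) ℝ} {a : Fin n → ℝ} {b : Fin m → ℝ} {c₀ : ℝ}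

lemma decompX (x : Fin n → ℝ) (y : Fin m → ℝ) :
    quadGame A B C a b c₀ (WithLp.toLp 2 x) (WithLp.toLp 2 y) =
      ((1/2) * (x ⬝ᵥ (A *ᵥ x)) + (C *ᵥ y + a) ⬝ᵥ x) +
        ((1/2) * (y ⬝ᵥ (B *ᵥ y)) + b ⬝ᵥ y + c₀) := by
  simp only [quadGame, WithLp.ofLp_toLp, add_dotProduct]
  rw [dotProduct_comm (C *ᵥ y) x]
  ring

lemma decompY (x : Fin n → ℝ) (y : Fin m → ℝ) :
    quadGame A B C a b c₀ (WithLp.toLp 2 x) (WithLp.toLp 2 y) =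
      -(((1/2) * (y ⬝ᵥ ((-B) *ᵥ y)) + (-(Cᵀ *ᵥ x + b)) ⬝ᵥ y)) +
        ((1/2) * (x ⬝ᵥ (A *ᵥ x)) + a ⬝ᵥ x + c₀) := by
  simp only [quadGame, WithLp.ofLp_toLp, Matrix.neg_mulVec, dotProduct_neg, neg_dotProduct,
    add_dotProduct]
  rw [dot_symm C x y]
  ring

lemma helperX (hA : A.IsSymm) {xs : Fin n → ℝ} {ys : Fin m → ℝ}
    (h : ∀ x : Fin n → ℝ, quadGame A B C a b c₀ (WithLp.toLp 2 xs) (WithLp.toLp 2 ys) ≤ quadGame A B C a b c₀ (WithLp.toLp 2 x) (WithLp.toLp 2 ys)) :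
    A.PosSemidef ∧ A *ᵥ xs + (C *ᵥ ys + a) = 0 := by
  refine quad_min hA ?_
  intro x
  have hx := h x
  rw [decompX xs ys, decompX x ys] at hx
  linarith

lemma helperY (hB : B.IsSymm) {xs : Fin n → ℝ} {ys : Fin m → ℝ}
    (h : ∀ y : Fin m → ℝ, quadGame A B C a b c₀ (WithLp.toLp 2 xs) (WithLp.toLp 2 y) ≤ quadGame A B C a b c₀ (WithLp.toLp 2 xs) (WithLp.toLp 2 ys)) :
    (-B).PosSemidef ∧ B *ᵥ ys + (Cᵀ *ᵥ xs + b) = 0 := by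
  have hB' : (-B).IsSymm := by
    rw [Matrix.IsSymm, Matrix.transpose_neg, hB.eq]
  have key := quad_min (d := -(Cᵀ *ᵥ xs + b)) (z := ys) hB' ?_
  · refine ⟨key.1, ?_⟩
    have h2 := key.2
    rw [Matrix.neg_mulVec, ← neg_add] at h2
    exact neg_eq_zero.mp h2
  · intro y
    have hy := h y
    rw [decompY xs y, decompY xs ys] at hy
    linarith

lemma helperX' (hA : A.IsSymm) (hP : A.PosSemidef) {xs : Fin n → ℝ} {ys : Fin m → ℝ}
    (hz : A *ᵥ xs + (C *ᵥ ys + a) = 0) :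
    ∀ x : Fin n → ℝ, quadGame A B C a b c₀ (WithLp.toLp 2 xs) (WithLp.toLp 2 ys) ≤ quadGame A B C a b c₀ (WithLp.toLp 2 x) (WithLp.toLp 2 ys) := by
  intro x
  have := quad_min' hA hP hz x
  rw [decompX xs ys, decompX x ys]
  linarith

lemma helperY' (hB : B.IsSymm) (hP : (-B).PosSemidef) {xs : Fin n → ℝ} {ys : Fin m → ℝ}
    (hz : B *ᵥ ys + (Cᵀ *ᵥ xs + b) = 0) :
    ∀ y : Fin m → ℝ, quadGame A B C a b c₀ (WithLp.toLp 2 xs) (WithLp.toLp 2 y) ≤ quadGame A B C a b c₀ (WithLp.toLp 2 xs) (WithLp.toLp 2 ys) := by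
  have hB' : (-B).IsSymm := by
    rw [Matrix.IsSymm, Matrix.transpose_neg, hB.eq]
  have hz' : (-B) *ᵥ ys + (-(Cᵀ *ᵥ xs + b)) = 0 := by
    rw [Matrix.neg_mulVec, ← neg_add, hz, neg_zero]
  intro y
  have := quad_min' hB' hP hz' y
  rw [decompY xs y, decompY xs ys]
  linarith

lemma joint (hA : A.IsSymm) (hB : B.IsSymm) (hPA : A.PosSemidef) (hPB : (-B).PosSemidef)
    (ha : ∃ (x : Fin n → ℝ) (y : Fin m → ℝ), A *ᵥ x + C *ᵥ y = a)
    (hb : ∃ (x : Fin n → ℝ) (y : Fin m → ℝ), Cᵀ *ᵥ x + B *ᵥ y = b) :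
    ∃ (x₀ : Fin n → ℝ) (y₀ : Fin m → ℝ),
      A *ᵥ x₀ + C *ᵥ y₀ = a ∧ Cᵀ *ᵥ x₀ + B *ᵥ y₀ = b := by
  obtain ⟨x₁, y₁, h1⟩ := ha
  obtain ⟨x₂, y₂, h2⟩ := hb
  set M : Matrix (Fin n ⊕ Fin m) (Fin n ⊕ Fin m) ℝ := Matrix.fromBlocks A C Cᵀ B with hMdef
  have hMsymm : M.IsSymm := by
    rw [Matrix.IsSymm, hMdef, Matrix.fromBlocks_transpose, Matrix.transpose_transpose,
      hA.eq, hB.eq]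
  have hker : ∀ u : Fin n ⊕ Fin m → ℝ, M *ᵥ u = 0 → (Sum.elim a b) ⬝ᵥ u = 0 := by
    intro u hu
    set u₁ : Fin n → ℝ := u ∘ Sum.inl with hu₁
    set u₂ : Fin m → ℝ := u ∘ Sum.inr with hu₂
    have huel : u = Sum.elim u₁ u₂ := by
      funext i; cases i <;> rfl
    rw [huel, hMdef, Matrix.fromBlocks_mulVec] at hu
    have hA0 : A *ᵥ u₁ + C *ᵥ u₂ = 0 := by
      funext i; exact congrFun hu (Sum.inl i)
    have hB0 : Cᵀ *ᵥ u₁ + B *ᵥ u₂ = 0 := by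
      funext i; exact congrFun hu (Sum.inr i)
    have d1 : u₁ ⬝ᵥ (A *ᵥ u₁) + u₁ ⬝ᵥ (C *ᵥ u₂) = 0 := by
      rw [← dotProduct_add, hA0, dotProduct_zero]
    have d2 : u₂ ⬝ᵥ (Cᵀ *ᵥ u₁) + u₂ ⬝ᵥ (B *ᵥ u₂) = 0 := by
      rw [← dotProduct_add, hB0, dotProduct_zero]
    have e : u₂ ⬝ᵥ (Cᵀ *ᵥ u₁) = u₁ ⬝ᵥ (C *ᵥ u₂) := by
      rw [dotProduct_comm, dot_symm C u₁ u₂]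
    have hApos : 0 ≤ u₁ ⬝ᵥ (A *ᵥ u₁) := by simpa using hPA.dotProduct_mulVec_nonneg u₁
    have hBneg : u₂ ⬝ᵥ (B *ᵥ u₂) ≤ 0 := by
      have := hPB.dotProduct_mulVec_nonneg u₂
      simp only [star_trivial, Matrix.neg_mulVec, dotProduct_neg] at this
      linarith
    have hAzero : u₁ ⬝ᵥ (A *ᵥ u₁) = 0 := by linarith
    have hBzero : u₂ ⬝ᵥ (B *ᵥ u₂) = 0 := by linarith
    have hAu : A *ᵥ u₁ = 0 := by
      have := (hPA.dotProduct_mulVec_zero_iff u₁).mp (by simpa using hAzero)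
      exact this
    have hBu : B *ᵥ u₂ = 0 := by
      have h0 : star u₂ ⬝ᵥ ((-B) *ᵥ u₂) = 0 := by
        simp only [star_trivial, Matrix.neg_mulVec, dotProduct_neg, hBzero, neg_zero]
      have := (hPB.dotProduct_mulVec_zero_iff u₂).mp h0
      rw [Matrix.neg_mulVec, neg_eq_zero] at this
      exact this
    have hCu : C *ᵥ u₂ = 0 := by
      have := hA0; rw [hAu, zero_add] at this; exact this
    have hCtu : Cᵀ *ᵥ u₁ = 0 := by
      have := hB0; rw [hBu, add_zero] at this; exact this
    rw [huel, sumElim_dotProduct_sumElim]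
    have ea : a ⬝ᵥ u₁ = 0 := by
      rw [← h1, add_dotProduct, dotProduct_comm (A *ᵥ x₁) u₁,
        dotProduct_comm (C *ᵥ y₁) u₁, dot_symm A u₁ x₁, hA.eq, hAu,
        dot_symm C u₁ y₁, hCtu]
      simp
    have eb : b ⬝ᵥ u₂ = 0 := by
      rw [← h2, add_dotProduct, dotProduct_comm (Cᵀ *ᵥ x₂) u₂,
        dotProduct_comm (B *ᵥ y₂) u₂, dot_symm Cᵀ u₂ x₂, Matrix.transpose_transpose,
        hCu, dot_symm B u₂ y₂, hB.eq, hBu]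
      simp
    rw [ea, eb, add_zero]
  obtain ⟨z, hz⟩ := symm_range M hMsymm (Sum.elim a b) hker
  refine ⟨z ∘ Sum.inl, z ∘ Sum.inr, ?_, ?_⟩
  · funext i
    have hzel : z = Sum.elim (z ∘ Sum.inl) (z ∘ Sum.inr) := by funext j; cases j <;> rfl
    rw [hzel, hMdef, Matrix.fromBlocks_mulVec] at hz
    exact congrFun hz (Sum.inl i)
  · funext i
    have hzel : z = Sum.elim (z ∘ Sum.inl) (z ∘ Sum.inr) := by funext j; cases j <;> rfl
    rw [hzel, hMdef, Matrix.fromBlocks_mulVec] at hz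
    exact congrFun hz (Sum.inr i)

end helpers


lemma neg_sol {ι : Type*} {f g h : ι → ℝ} (H : f + (g + h) = 0) : (-f) + (-g) = h := by
  funext i
  have := congrFun H i
  simp only [Pi.add_apply, Pi.zero_apply] at this
  simp only [Pi.add_apply, Pi.neg_apply]
  linarith

lemma neg_sol' {ι : Type*} {f g h : ι → ℝ} (H : f + g = h) : (-f) + ((-g) + h) = 0 := by
  funext i
  have := congrFun H i
  simp only [Pi.add_apply] at this
  simp only [Pi.add_apply, Pi.neg_apply, Pi.zero_apply]
  linarith

/-- For quadratic games: existence of a global saddle point, the joint existence of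
global minimax and global maximin points, and the algebraic condition
`A ⪰ 0 ⪰ B` with solvability of the stationarity equations are all equivalent. -/
theorem quadGame_saddle_existence_tfae {n m : ℕ}
    (A : Matrix (Fin n) (Fin n) ℝ) (B : Matrix (Fin m) (Fin m) ℝ)
    (C : Matrix (Fin n) (Fin m) ℝ) (a : Fin n → ℝ) (b : Fin m → ℝ) (c₀ : ℝ)
    (hA : A.IsSymm) (hB : B.IsSymm) :
    ((∃ xs ys, IsGlobalSaddle (quadGame A B C a b c₀) xs ys) ↔
      ((∃ xs ys, IsGlobalMinimax (quadGame A B C a b c₀) xs ys) ∧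
       (∃ xs ys, IsGlobalMaximin (quadGame A B C a b c₀) xs ys))) ∧
    ((∃ xs ys, IsGlobalSaddle (quadGame A B C a b c₀) xs ys) ↔
      (A.PosSemidef ∧ Matrix.NegSemidef' B ∧
        ∃ (x₀ : Fin n → ℝ) (y₀ : Fin m → ℝ),
          A *ᵥ x₀ + C *ᵥ y₀ = a ∧ Cᵀ *ᵥ x₀ + B *ᵥ y₀ = b)) := by

  have hiff : (∃ xs ys, IsGlobalSaddle (quadGame A B C a b c₀) xs ys) ↔
      (A.PosSemidef ∧ Matrix.NegSemidef' B ∧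
        ∃ (x₀ : Fin n → ℝ) (y₀ : Fin m → ℝ),
          A *ᵥ x₀ + C *ᵥ y₀ = a ∧ Cᵀ *ᵥ x₀ + B *ᵥ y₀ = b) := by
    constructor
    · rintro ⟨xs, ys, h1, h2⟩
      have hX := helperX (xs := xs.ofLp) (ys := ys.ofLp) hA (fun x => h2 (WithLp.toLp 2 x))
      have hY := helperY (xs := xs.ofLp) (ys := ys.ofLp) hB (fun y => h1 (WithLp.toLp 2 y))
      refine ⟨hX.1, hY.1, -xs.ofLp, -ys.ofLp, ?_, ?_⟩
      · rw [Matrix.mulVec_neg, Matrix.mulVec_neg]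
        exact neg_sol hX.2
      · rw [Matrix.mulVec_neg, Matrix.mulVec_neg, add_comm]
        exact neg_sol hY.2
    · rintro ⟨hPA, hPB, x₀, y₀, hx, hy⟩
      refine ⟨WithLp.toLp 2 (-x₀), WithLp.toLp 2 (-y₀), fun y => helperY' (xs := -x₀) (ys := -y₀) hB hPB ?_ y.ofLp,
          fun x => helperX' (xs := -x₀) (ys := -y₀) hA hPA ?_ x.ofLp⟩
      · rw [Matrix.mulVec_neg, Matrix.mulVec_neg]
        rw [add_comm] at hy
        exact neg_sol' hy
      · rw [Matrix.mulVec_neg, Matrix.mulVec_neg]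
        exact neg_sol' hx
  refine ⟨?_, hiff⟩
  constructor
  · rintro ⟨xs, ys, h1, h2⟩
    exact ⟨⟨xs, ys, h1, fun x c hc => le_trans (h2 x) (hc ys)⟩,
           ⟨xs, ys, h2, fun y c hc => le_trans (hc xs) (h1 y)⟩⟩
  · rintro ⟨⟨xs, ys, h1, -⟩, ⟨xs', ys', h2, -⟩⟩
    rw [hiff]
    have hY := helperY (xs := xs.ofLp) (ys := ys.ofLp) hB (fun y => h1 (WithLp.toLp 2 y))
    have hX := helperX (xs := xs'.ofLp) (ys := ys'.ofLp) hA (fun x => h2 (WithLp.toLp 2 x))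
    refine ⟨hX.1, hY.1, joint hA hB hX.1 hY.1 ⟨-xs'.ofLp, -ys'.ofLp, ?_⟩ ⟨-xs.ofLp, -ys.ofLp, ?_⟩⟩
    · rw [Matrix.mulVec_neg, Matrix.mulVec_neg]
      exact neg_sol hX.2
    · rw [Matrix.mulVec_neg, Matrix.mulVec_neg, add_comm]
      exact neg_sol hY.2
end

section
/- Let a, b, c ∈ ℝ and f(x,y) = a x²/2 + c x y + b y²/2 on ℝ × ℝ. Then (0,0) is a local robust point of f if and only if either (c = 0, a ≥ 0 and b ≤ 0) or (c ≠ 0 and c² ≥ a b). -/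
open Filter

/-- One-dimensional local upper envelope `f̄_{ε,y*}(x) = max_{|y−y*|≤ε} f(x,y)`. -/
noncomputable def envU1 (f : ℝ → ℝ → ℝ) (ystar ε x : ℝ) : ℝ :=
  sSup ((fun y => f x y) '' Metric.closedBall ystar ε)

/-- One-dimensional local lower envelope `f̲_{ε,x*}(y) = min_{|x−x*|≤ε} f(x,y)`. -/
noncomputable def envL1 (f : ℝ → ℝ → ℝ) (xstar ε y : ℝ) : ℝ :=
  sInf ((fun x => f x y) '' Metric.closedBall xstar ε)

/-- `(x⋆, y⋆)` is a local robust point of `f : ℝ × ℝ → ℝ`: there are nonnegative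
sequences `ε_n → 0` and `ε'_n → 0` such that for every `n`, `y⋆` is a local maximizer
of `f̲_{ε'_n,x⋆}` and `x⋆` is a local minimizer of `f̄_{ε_n,y⋆}`. -/
def IsLocalRobust (f : ℝ → ℝ → ℝ) (xstar ystar : ℝ) : Prop :=
  ∃ εseq ε'seq : ℕ → ℝ,
    (∀ k, 0 ≤ εseq k) ∧ Tendsto εseq atTop (nhds 0) ∧
    (∀ k, 0 ≤ ε'seq k) ∧ Tendsto ε'seq atTop (nhds 0) ∧
    (∀ k, ∃ δ > (0 : ℝ), ∀ y : ℝ, |y - ystar| ≤ δ →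
      envL1 f xstar (ε'seq k) y ≤ envL1 f xstar (ε'seq k) ystar) ∧
    (∀ k, ∃ δ > (0 : ℝ), ∀ x : ℝ, |x - xstar| ≤ δ →
      envU1 f ystar (εseq k) xstar ≤ envU1 f ystar (εseq k) x)

/-- The quadratic under consideration. -/
noncomputable def quadF (a b c : ℝ) : ℝ → ℝ → ℝ := fun x y => a * x ^ 2 / 2 + c * x * y + b * y ^ 2 / 2

lemma quadF_cont1 (a b c x : ℝ) : Continuous fun y => quadF a b c x y := by
  unfold quadF; fun_prop

lemma quadF_cont2 (a b c y : ℝ) : Continuous fun x => quadF a b c x y := by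
  unfold quadF; fun_prop

lemma mem_cb {z r : ℝ} (h : |z| ≤ r) : z ∈ Metric.closedBall (0:ℝ) r := by
  simpa [Real.dist_eq] using h

lemma le_envU1 {f : ℝ → ℝ → ℝ} {ystar ε x y : ℝ} (hc : Continuous fun y => f x y)
    (hy : y ∈ Metric.closedBall ystar ε) : f x y ≤ envU1 f ystar ε x :=
  le_csSup ((isCompact_closedBall _ _).image hc).bddAbove ⟨y, hy, rfl⟩

lemma envU1_le {f : ℝ → ℝ → ℝ} {ystar ε x M : ℝ} (hε : 0 ≤ ε)
    (h : ∀ y ∈ Metric.closedBall ystar ε, f x y ≤ M) : envU1 f ystar ε x ≤ M :=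
  csSup_le ((Metric.nonempty_closedBall.2 hε).image _)
    (by rintro _ ⟨y, hy, rfl⟩; exact h y hy)

lemma envL1_le {f : ℝ → ℝ → ℝ} {xstar ε y x : ℝ} (hc : Continuous fun x => f x y)
    (hx : x ∈ Metric.closedBall xstar ε) : envL1 f xstar ε y ≤ f x y :=
  csInf_le ((isCompact_closedBall _ _).image hc).bddBelow ⟨x, hx, rfl⟩

lemma le_envL1 {f : ℝ → ℝ → ℝ} {xstar ε y m : ℝ} (hε : 0 ≤ ε)
    (h : ∀ x ∈ Metric.closedBall xstar ε, m ≤ f x y) : m ≤ envL1 f xstar ε y :=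
  le_csInf ((Metric.nonempty_closedBall.2 hε).image _)
    (by rintro _ ⟨x, hx, rfl⟩; exact h x hx)

set_option maxHeartbeats 1000000 in
lemma quadF_isLocalRobust_iff (a b c : ℝ) :
    IsLocalRobust (quadF a b c) 0 0 ↔
      ((c = 0 ∧ 0 ≤ a ∧ b ≤ 0) ∨ (c ≠ 0 ∧ a * b ≤ c ^ 2)) := by
  have hF : ∀ x y : ℝ, quadF a b c x y = a * x ^ 2 / 2 + c * x * y + b * y ^ 2 / 2 :=
    fun _ _ => rfl
  constructor
  · rintro ⟨ε, ε', hε0, -, hε'0, -, hmax, hmin⟩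
    by_cases hc : c = 0
    · subst hc
      left
      refine ⟨rfl, ?_, ?_⟩
      · -- 0 ≤ a, else the envU local-min condition fails
        by_contra ha
        push_neg at ha
        obtain ⟨δ, hδ, hmn⟩ := hmin 0
        set e := ε 0 with he
        have h1 : envU1 (quadF a b 0) 0 e 0 ≤ envU1 (quadF a b 0) 0 e δ :=
          hmn δ (by rw [sub_zero, abs_of_pos hδ])
        have h2 : envU1 (quadF a b 0) 0 e δ ≤ a * δ ^ 2 / 2 + envU1 (quadF a b 0) 0 e 0 := by
          refine envU1_le (hε0 0) fun y hy => ?_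
          have := le_envU1 (f := quadF a b 0) (x := 0) (quadF_cont1 a b 0 0) hy
          rw [hF] at this ⊢
          nlinarith [this]
        nlinarith [sq_nonneg δ, mul_pos hδ hδ]
      · -- b ≤ 0, else the envL local-max condition fails
        by_contra hb
        push_neg at hb
        obtain ⟨δ, hδ, hmx⟩ := hmax 0
        set e := ε' 0 with he
        have h1 : envL1 (quadF a b 0) 0 e δ ≤ envL1 (quadF a b 0) 0 e 0 :=
          hmx δ (by rw [sub_zero, abs_of_pos hδ])
        have h2 : b * δ ^ 2 / 2 + envL1 (quadF a b 0) 0 e 0 ≤ envL1 (quadF a b 0) 0 e δ := by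
          refine le_envL1 (hε'0 0) fun x hx => ?_
          have := envL1_le (f := quadF a b 0) (y := 0) (quadF_cont2 a b 0 0) hx
          rw [hF] at this ⊢
          nlinarith [this]
        nlinarith [mul_pos hδ hδ]
    · right
      refine ⟨hc, ?_⟩
      by_contra hab
      push_neg at hab
      have hc2 : 0 < c ^ 2 := by positivity
      have habpos : 0 < a * b := lt_trans hc2 hab
      rcases lt_or_gt_of_ne (fun h : a = 0 => by simp [h] at habpos) with ha | ha
      · -- a < 0, hence b < 0 : contradict the envU local-min condition
        have hb : b < 0 := by nlinarith
        obtain ⟨δ, hδ, hmn⟩ := hmin 0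
        set e := ε 0 with he
        have h1 : envU1 (quadF a b c) 0 e 0 ≤ envU1 (quadF a b c) 0 e δ :=
          hmn δ (by rw [sub_zero, abs_of_pos hδ])
        have h2 : envU1 (quadF a b c) 0 e δ ≤ δ ^ 2 * (a * b - c ^ 2) / (2 * b) := by
          refine envU1_le (hε0 0) fun y _ => ?_
          rw [hF, le_div_iff_of_neg (by linarith : 2 * b < 0)]
          nlinarith [sq_nonneg (b * y + c * δ)]
        have h3 : (0:ℝ) ≤ envU1 (quadF a b c) 0 e 0 := by
          have hm : (0:ℝ) ∈ Metric.closedBall (0:ℝ) e :=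
            mem_cb (by rw [abs_zero]; exact hε0 0)
          have := le_envU1 (f := quadF a b c) (x := 0) (quadF_cont1 a b c 0) hm
          rw [hF] at this; linarith [this]
        have h4 : δ ^ 2 * (a * b - c ^ 2) / (2 * b) < 0 := by
          apply div_neg_of_pos_of_neg
          · have : 0 < δ ^ 2 := by positivity
            nlinarith
          · linarith
        linarith
      · -- a > 0, hence b > 0 : contradict the envL local-max condition
        have hb : 0 < b := by nlinarith
        obtain ⟨δ, hδ, hmx⟩ := hmax 0
        set e := ε' 0 with he
        have h1 : envL1 (quadF a b c) 0 e δ ≤ envL1 (quadF a b c) 0 e 0 :=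
          hmx δ (by rw [sub_zero, abs_of_pos hδ])
        have h2 : δ ^ 2 * (a * b - c ^ 2) / (2 * a) ≤ envL1 (quadF a b c) 0 e δ := by
          refine le_envL1 (hε'0 0) fun x _ => ?_
          rw [hF, div_le_iff₀ (by linarith : (0:ℝ) < 2 * a)]
          nlinarith [sq_nonneg (a * x + c * δ)]
        have h3 : envL1 (quadF a b c) 0 e 0 ≤ 0 := by
          have hm : (0:ℝ) ∈ Metric.closedBall (0:ℝ) e :=
            mem_cb (by rw [abs_zero]; exact hε'0 0)
          have := envL1_le (f := quadF a b c) (y := 0) (quadF_cont2 a b c 0) hm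
          rw [hF] at this; linarith [this]
        have h4 : 0 < δ ^ 2 * (a * b - c ^ 2) / (2 * a) := by
          apply div_pos
          · have : 0 < δ ^ 2 := by positivity
            nlinarith
          · linarith
        linarith
  · rintro (⟨hc, ha, hb⟩ | ⟨hc, hab⟩)
    · -- c = 0, a ≥ 0, b ≤ 0 : take ε_k = ε'_k = 0
      subst hc
      refine ⟨fun _ => 0, fun _ => 0, fun _ => le_refl 0, tendsto_const_nhds,
        fun _ => le_refl 0, tendsto_const_nhds, ?_, ?_⟩
      · intro k
        refine ⟨1, one_pos, fun y _ => ?_⟩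
        have h1 : ∀ z : ℝ, envL1 (quadF a b 0) 0 0 z = quadF a b 0 0 z := by
          intro z
          unfold envL1
          rw [Metric.closedBall_zero, Set.image_singleton, csInf_singleton]
        rw [h1, h1, hF, hF]
        nlinarith [sq_nonneg y]
      · intro k
        refine ⟨1, one_pos, fun x _ => ?_⟩
        have h1 : ∀ z : ℝ, envU1 (quadF a b 0) 0 0 z = quadF a b 0 z 0 := by
          intro z
          unfold envU1
          rw [Metric.closedBall_zero, Set.image_singleton, csSup_singleton]
        rw [h1, h1, hF, hF]
        nlinarith [sq_nonneg x]
    · -- c ≠ 0, a*b ≤ c² : take ε_k = ε'_k = 1/(k+1)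
      have hcabs : 0 < |c| := abs_pos.2 hc
      refine ⟨fun k => 1 / ((k:ℝ) + 1), fun k => 1 / ((k:ℝ) + 1),
        fun k => by positivity, tendsto_one_div_add_atTop_nhds_zero_nat,
        fun k => by positivity, tendsto_one_div_add_atTop_nhds_zero_nat, ?_, ?_⟩
      · -- local maximality of 0 for the lower envelope
        intro k
        set e : ℝ := 1 / ((k:ℝ) + 1) with hedef
        have hepos : 0 < e := by positivity
        rcases lt_or_ge 0 a with ha | ha
        · -- a > 0 : interior minimizer x₀ = -c*y/a
          refine ⟨e * a / |c|, by positivity, fun y hy => ?_⟩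
          rw [sub_zero] at hy
          have hx0 : |(-c * y / a)| ≤ e := by
            rw [abs_div, abs_of_pos ha, div_le_iff₀ ha, abs_mul, abs_neg]
            calc |c| * |y| ≤ |c| * (e * a / |c|) := by
                  exact mul_le_mul_of_nonneg_left hy (abs_nonneg c)
              _ = e * a := by field_simp
          have h2 : envL1 (quadF a b c) 0 e y ≤ y ^ 2 * (a * b - c ^ 2) / (2 * a) := by
            have := envL1_le (f := quadF a b c) (y := y) (quadF_cont2 a b c y) (mem_cb hx0)
            rw [hF] at this
            calc envL1 (quadF a b c) 0 e y
                ≤ a * (-c * y / a) ^ 2 / 2 + c * (-c * y / a) * y + b * y ^ 2 / 2 := this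
              _ = y ^ 2 * (a * b - c ^ 2) / (2 * a) := by field_simp; ring
          have h3 : (0:ℝ) ≤ envL1 (quadF a b c) 0 e 0 := by
            refine le_envL1 hepos.le fun x _ => ?_
            rw [hF]
            nlinarith [sq_nonneg x]
          have h4 : y ^ 2 * (a * b - c ^ 2) / (2 * a) ≤ 0 := by
            apply div_nonpos_of_nonpos_of_nonneg
            · nlinarith [sq_nonneg y]
            · linarith
          linarith
        · -- a ≤ 0 : endpoint minimizer x₀ = ∓e
          refine ⟨2 * |c| * e / (|b| + 1), by positivity, fun y hy => ?_⟩
          rw [sub_zero] at hy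
          set x0 : ℝ := if 0 ≤ c * y then -e else e with hx0def
          have hx0 : |x0| ≤ e := by
            rw [hx0def]; split <;> simp [abs_of_pos hepos, le_refl]
          have hcx0 : c * x0 * y = -(|c * y| * e) := by
            rw [hx0def]; split
            · rename_i h; rw [abs_of_nonneg h]; ring
            · rename_i h; rw [abs_of_neg (lt_of_not_ge h)]; ring
          have h2 : envL1 (quadF a b c) 0 e y ≤ a * e ^ 2 / 2 - |c * y| * e + b * y ^ 2 / 2 := by
            have := envL1_le (f := quadF a b c) (y := y) (quadF_cont2 a b c y) (mem_cb hx0)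
            rw [hF] at this
            have hx0sq : x0 ^ 2 = e ^ 2 := by
              rw [hx0def]; split <;> ring
            rw [hx0sq, hcx0] at this
            linarith
          have h3 : a * e ^ 2 / 2 ≤ envL1 (quadF a b c) 0 e 0 := by
            refine le_envL1 hepos.le fun x hx => ?_
            rw [hF]
            rw [Metric.mem_closedBall, Real.dist_eq, sub_zero] at hx
            have hx2 : x ^ 2 ≤ e ^ 2 := by
              have := mul_self_le_mul_self (abs_nonneg x) hx
              nlinarith [sq_abs x]
            nlinarith
          -- key : b * y^2 / 2 ≤ |c*y| * e
          have hkey : b * y ^ 2 / 2 ≤ |c * y| * e := by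
            have hb1 : (0:ℝ) < |b| + 1 := by positivity
            have h5' : |y| * (|b| + 1) ≤ 2 * |c| * e := by
              rw [← le_div_iff₀ hb1]; exact hy
            have p1 := mul_le_mul_of_nonneg_left h5' (abs_nonneg y)
            have p2 : 0 ≤ (|b| - b) * (|y| * |y|) :=
              mul_nonneg (by linarith [le_abs_self b]) (mul_self_nonneg _)
            have hy2 : y ^ 2 = |y| * |y| := by rw [← sq_abs y]; ring
            rw [abs_mul, hy2]
            nlinarith [mul_self_nonneg |y|]
          linarith
      · -- local minimality of 0 for the upper envelope
        intro k
        set e : ℝ := 1 / ((k:ℝ) + 1) with hedef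
        have hepos : 0 < e := by positivity
        rcases lt_or_ge b 0 with hb | hb
        · -- b < 0 : interior maximizer y₀ = -c*x/b
          have hbne : b ≠ 0 := hb.ne
          refine ⟨e * |b| / |c|,
            div_pos (mul_pos hepos (abs_pos.2 hbne)) hcabs, fun x hx => ?_⟩
          rw [sub_zero] at hx
          have hy0 : |(-c * x / b)| ≤ e := by
            rw [abs_div, abs_of_neg hb, div_le_iff₀ (by linarith : (0:ℝ) < -b),
              abs_mul, abs_neg]
            calc |c| * |x| ≤ |c| * (e * |b| / |c|) := by
                  exact mul_le_mul_of_nonneg_left hx (abs_nonneg c)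
              _ = e * |b| := by field_simp
              _ = e * -b := by rw [abs_of_neg hb]
          have h2 : x ^ 2 * (a * b - c ^ 2) / (2 * b) ≤ envU1 (quadF a b c) 0 e x := by
            have := le_envU1 (f := quadF a b c) (x := x) (quadF_cont1 a b c x) (mem_cb hy0)
            rw [hF] at this
            calc x ^ 2 * (a * b - c ^ 2) / (2 * b)
                = a * x ^ 2 / 2 + c * x * (-c * x / b) + b * (-c * x / b) ^ 2 / 2 := by
                  field_simp; ring
              _ ≤ envU1 (quadF a b c) 0 e x := this
          have h3 : envU1 (quadF a b c) 0 e 0 ≤ 0 := by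
            refine envU1_le hepos.le fun y _ => ?_
            rw [hF]
            nlinarith [sq_nonneg y]
          have h4 : 0 ≤ x ^ 2 * (a * b - c ^ 2) / (2 * b) := by
            apply div_nonneg_of_nonpos
            · nlinarith [sq_nonneg x]
            · linarith
          linarith
        · -- b ≥ 0 : endpoint maximizer y₀ = ±e
          refine ⟨2 * |c| * e / (|a| + 1), by positivity, fun x hx => ?_⟩
          rw [sub_zero] at hx
          set y0 : ℝ := if 0 ≤ c * x then e else -e with hy0def
          have hy0 : |y0| ≤ e := by
            rw [hy0def]; split <;> simp [abs_of_pos hepos, le_refl]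
          have hcy0 : c * x * y0 = |c * x| * e := by
            rw [hy0def]; split
            · rename_i h; rw [abs_of_nonneg h]
            · rename_i h; rw [abs_of_neg (lt_of_not_ge h)]; ring
          have h2 : a * x ^ 2 / 2 + |c * x| * e + b * e ^ 2 / 2 ≤ envU1 (quadF a b c) 0 e x := by
            have := le_envU1 (f := quadF a b c) (x := x) (quadF_cont1 a b c x) (mem_cb hy0)
            rw [hF] at this
            have hy0sq : y0 ^ 2 = e ^ 2 := by
              rw [hy0def]; split <;> ring
            rw [hy0sq, hcy0] at this
            linarith
          have h3 : envU1 (quadF a b c) 0 e 0 ≤ b * e ^ 2 / 2 := by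
            refine envU1_le hepos.le fun y hy => ?_
            rw [hF]
            rw [Metric.mem_closedBall, Real.dist_eq, sub_zero] at hy
            have hy2 : y ^ 2 ≤ e ^ 2 := by
              have := mul_self_le_mul_self (abs_nonneg y) hy
              nlinarith [sq_abs y]
            nlinarith
          -- key : -(a * x^2 / 2) ≤ |c*x| * e
          have hkey : -(a * x ^ 2 / 2) ≤ |c * x| * e := by
            have hb1 : (0:ℝ) < |a| + 1 := by positivity
            have h5' : |x| * (|a| + 1) ≤ 2 * |c| * e := by
              rw [← le_div_iff₀ hb1]; exact hx
            have p1 := mul_le_mul_of_nonneg_left h5' (abs_nonneg x)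
            have p2 : 0 ≤ (|a| + a) * (|x| * |x|) :=
              mul_nonneg (by linarith [neg_abs_le a]) (mul_self_nonneg _)
            have hx2 : x ^ 2 = |x| * |x| := by rw [← sq_abs x]; ring
            rw [abs_mul, hx2]
            nlinarith [mul_self_nonneg |x|]
          linarith

/-- For `f(x,y) = a x²/2 + c x y + b y²/2` on `ℝ × ℝ`, the origin is a local robust
point iff either (`c = 0`, `a ≥ 0` and `b ≤ 0`) or (`c ≠ 0` and `c² ≥ a b`). -/
theorem quadratic_1d_isLocalRobust_iff (a b c : ℝ) :
    IsLocalRobust (fun x y => a * x ^ 2 / 2 + c * x * y + b * y ^ 2 / 2) 0 0 ↔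
      ((c = 0 ∧ 0 ≤ a ∧ b ≤ 0) ∨ (c ≠ 0 ∧ a * b ≤ c ^ 2)) :=
  quadF_isLocalRobust_iff a b c
end

section
/- Let d be a natural number, v : ℝ^d → ℝ^d a map, and β a nonzero real number. Suppose z, w : ℕ → ℝ^d satisfy, for all t ∈ ℕ, z(t+1) = z(t) + (1/β)·v(w(t)) and w(t+1) = z(t+1) + v(w(t)). Then for all t ∈ ℕ, w(t+2) = w(t+1) + (1 + 1/β)·v(w(t+1)) − v(w(t)); that is, the past extra-gradient iterates w satisfy the generalized optimistic gradient descent recursion with parameter k = 1 + 1/β. -/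
/-- The past extra-gradient iterates satisfy the generalized optimistic gradient
descent recursion with parameter `k = 1 + 1/β`. -/
theorem pastExtraGradient_eq_ogd {d : ℕ}
    (v : EuclideanSpace ℝ (Fin d) → EuclideanSpace ℝ (Fin d))
    (β : ℝ) (hβ : β ≠ 0)
    (z w : ℕ → EuclideanSpace ℝ (Fin d))
    (hz : ∀ t : ℕ, z (t + 1) = z t + (1 / β) • v (w t))
    (hw : ∀ t : ℕ, w (t + 1) = z (t + 1) + v (w t)) :
    ∀ t : ℕ, w (t + 2) = w (t + 1) + (1 + 1 / β) • v (w (t + 1)) - v (w t) := by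
  intro t
  have h1 := hw t
  have h2 := hw (t + 1)
  have h3 := hz (t + 1)
  rw [show t + 2 = t + 1 + 1 from rfl, h2, h3]
  rw [h1]
  module
end

section
/- Let a, b ∈ ℂ. Every complex root λ of the polynomial λ² + a·λ + b satisfies |λ| < 1 if and only if |b| < 1 and (1 − |b|²)² + 2·Re(a²·conj(b)) > |a|²·(1 + |b|²). -/
open Complex

lemma schur_key_identity (x y : ℂ) :
    (1 - ‖x * y‖ ^ 2) ^ 2 + 2 * ((x + y) ^ 2 * (starRingEnd ℂ) (x * y)).re
      - ‖x + y‖ ^ 2 * (1 + ‖x * y‖ ^ 2)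
    = (1 - ‖x‖ ^ 2) * (1 - ‖y‖ ^ 2) *
        ‖1 - x * (starRingEnd ℂ) y‖ ^ 2 := by
  simp only [Complex.sq_norm]
  simp only [Complex.normSq_apply, pow_two, Complex.mul_re, Complex.mul_im,
    Complex.add_re, Complex.add_im, Complex.sub_re, Complex.sub_im, Complex.one_re,
    Complex.one_im, Complex.conj_re, Complex.conj_im]
  ring

/-- Schur's criterion for complex quadratic polynomials: all roots of
`λ² + aλ + b` lie in the open unit disk iff `|b| < 1` and
`(1 − |b|²)² + 2 Re(a² conj(b)) > |a|² (1 + |b|²)`. -/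
theorem schur_quadratic_roots_in_unit_disk (a b : ℂ) :
    (∀ lam : ℂ, lam ^ 2 + a * lam + b = 0 → ‖lam‖ < 1) ↔
      (‖b‖ < 1 ∧
        (1 - ‖b‖ ^ 2) ^ 2 + 2 * (a ^ 2 * (starRingEnd ℂ) b).re >
          ‖a‖ ^ 2 * (1 + ‖b‖ ^ 2)) := by
  -- produce the two roots
  obtain ⟨s, hs⟩ := IsAlgClosed.exists_pow_nat_eq (a ^ 2 - 4 * b) zero_lt_two
  set x : ℂ := (-a + s) / 2 with hx
  set y : ℂ := (-a - s) / 2 with hy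
  have hsum : x + y = -a := by rw [hx, hy]; ring
  have hprod : x * y = b := by
    rw [hx, hy]
    have : s ^ 2 = a ^ 2 - 4 * b := hs
    field_simp
    linear_combination -this
  have ha2 : a ^ 2 = (x + y) ^ 2 := by rw [hsum]; ring
  have haabs : ‖a‖ = ‖x + y‖ := by rw [hsum, norm_neg]
  have hxroot : x ^ 2 + a * x + b = 0 := by
    have : a = -(x + y) := by rw [hsum]; ring
    rw [this, ← hprod]; ring
  have hyroot : y ^ 2 + a * y + b = 0 := by
    have : a = -(x + y) := by rw [hsum]; ring
    rw [this, ← hprod]; ring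
  have key := schur_key_identity x y
  rw [hprod, ← ha2, ← haabs] at key
  constructor
  · intro h
    have hxlt := h x hxroot
    have hylt := h y hyroot
    have hb : ‖b‖ < 1 := by
      rw [← hprod, norm_mul]
      have := norm_nonneg x
      have := norm_nonneg y
      nlinarith
    refine ⟨hb, ?_⟩
    have hne : (1 : ℂ) - x * (starRingEnd ℂ) y ≠ 0 := by
      intro hzero
      have h1 : x * (starRingEnd ℂ) y = 1 := by linear_combination -hzero
      have : ‖x * (starRingEnd ℂ) y‖ = 1 := by rw [h1, norm_one]
      rw [norm_mul, Complex.norm_conj] at this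
      nlinarith [norm_nonneg x, norm_nonneg y]
    have hm : 0 < ‖1 - x * (starRingEnd ℂ) y‖ ^ 2 :=
      pow_pos (norm_pos_iff.mpr hne) 2
    have h1 : 0 < (1 - ‖x‖ ^ 2) := by nlinarith [norm_nonneg x]
    have h2 : 0 < (1 - ‖y‖ ^ 2) := by nlinarith [norm_nonneg y]
    nlinarith [mul_pos (mul_pos h1 h2) hm]
  · rintro ⟨hb, hE⟩ lam hroot
    -- the positive product forces both roots in the disk
    have hm : 0 ≤ ‖1 - x * (starRingEnd ℂ) y‖ ^ 2 := sq_nonneg _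
    have hprod_pos : 0 < (1 - ‖x‖ ^ 2) * (1 - ‖y‖ ^ 2) := by
      rcases lt_or_ge 0 ((1 - ‖x‖ ^ 2) * (1 - ‖y‖ ^ 2)) with h | h
      · exact h
      · exfalso; nlinarith
    have hrs : ‖x‖ ^ 2 * (‖y‖ ^ 2) < 1 := by
      have h' : ‖x‖ * ‖y‖ < 1 := by rw [← norm_mul, hprod]; exact hb
      nlinarith [mul_nonneg (norm_nonneg x) (norm_nonneg y), h']
    have hx2 : ‖x‖ ^ 2 < 1 := by
      by_contra hc; push_neg at hc
      have hy2 : 1 - ‖y‖ ^ 2 < 0 := by nlinarith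
      nlinarith
    have hy2 : ‖y‖ ^ 2 < 1 := by
      by_contra hc; push_neg at hc
      have hx2' : 1 - ‖x‖ ^ 2 < 0 := by nlinarith
      nlinarith
    have hxlt : ‖x‖ < 1 := by nlinarith [norm_nonneg x]
    have hylt : ‖y‖ < 1 := by nlinarith [norm_nonneg y]
    -- lam is one of the two roots
    have hfac : (lam - x) * (lam - y) = 0 := by
      have ha : a = -(x + y) := by rw [hsum]; ring
      calc (lam - x) * (lam - y) = lam ^ 2 + a * lam + b := by
            rw [ha, ← hprod]; ring
        _ = 0 := hroot
    rcases mul_eq_zero.1 hfac with h | h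
    · rw [sub_eq_zero.1 h]; exact hxlt
    · rw [sub_eq_zero.1 h]; exact hylt
end

section
/- Let k > 1 be a real number and λ ∈ ℂ. Every complex root x of the polynomial x² − (1 + k·λ)·x + λ satisfies |x| < 1 if and only if |λ| < 1 and |λ|²·(k − 3 + (k + 1)·|λ|²) < 2·Re(λ)·(k·|λ|² − 1). -/
private lemma ogd_abs_lt_one_iff_normSq (z : ℂ) :
    ‖z‖ < 1 ↔ Complex.normSq z < 1 := by
  rw [← Complex.sq_norm]
  constructor
  · intro h; nlinarith [norm_nonneg z]
  · intro h; nlinarith [norm_nonneg z]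

private lemma ogd_abs_lt_of_normSq_lt {z : ℂ} {R : ℝ} (hR : 0 ≤ R)
    (h : Complex.normSq z < R ^ 2) : ‖z‖ < R := by
  rw [← Complex.sq_norm] at h
  nlinarith [norm_nonneg z]

private lemma ogd_normSq_lt_of_abs_lt {z : ℂ} {R : ℝ} (h : ‖z‖ < R) :
    Complex.normSq z < R ^ 2 := by
  rw [← Complex.sq_norm]
  nlinarith [norm_nonneg z]

/-- Schur–Cohn criterion for a monic complex quadratic with roots `r`, `s`. -/
private lemma ogd_both_roots_lt_one (r s : ℂ) :
    (‖r‖ < 1 ∧ ‖s‖ < 1) ↔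
      (‖r * s‖ < 1 ∧
        ‖(starRingEnd ℂ) (r + s) - (starRingEnd ℂ) (r * s) * (r + s)‖ <
          1 - ‖r * s‖ ^ 2) := by
  have hkey : (1 - Complex.normSq (r * s)) ^ 2 -
      Complex.normSq ((starRingEnd ℂ) (r + s) - (starRingEnd ℂ) (r * s) * (r + s)) =
      (1 - Complex.normSq r) * (1 - Complex.normSq s) *
        (Complex.normSq (r - s) + (1 - Complex.normSq r) * (1 - Complex.normSq s)) := by
    simp only [Complex.normSq_apply, Complex.mul_re, Complex.mul_im, Complex.add_re,
      Complex.add_im, Complex.sub_re, Complex.sub_im, Complex.conj_re, Complex.conj_im]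
    ring
  have hsq : ‖r * s‖ ^ 2 = Complex.normSq (r * s) := Complex.sq_norm _
  constructor
  · rintro ⟨h1, h2⟩
    have hP : Complex.normSq r < 1 := (ogd_abs_lt_one_iff_normSq r).mp h1
    have hQ : Complex.normSq s < 1 := (ogd_abs_lt_one_iff_normSq s).mp h2
    have hP0 := Complex.normSq_nonneg r
    have hQ0 := Complex.normSq_nonneg s
    have hmul : Complex.normSq (r * s) = Complex.normSq r * Complex.normSq s :=
      Complex.normSq_mul r s
    have hPQ : Complex.normSq (r * s) < 1 := by rw [hmul]; nlinarith
    refine ⟨(ogd_abs_lt_one_iff_normSq _).mpr hPQ, ?_⟩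
    rw [hsq]
    refine ogd_abs_lt_of_normSq_lt (by linarith) ?_
    have hd0 := Complex.normSq_nonneg (r - s)
    have hAB : 0 < (1 - Complex.normSq r) * (1 - Complex.normSq s) :=
      mul_pos (by linarith) (by linarith)
    have h3 : 0 < (1 - Complex.normSq r) * (1 - Complex.normSq s) *
        (Complex.normSq (r - s) + (1 - Complex.normSq r) * (1 - Complex.normSq s)) :=
      mul_pos hAB (by linarith)
    linarith [hkey]
  · rintro ⟨h1, h2⟩
    have hPQ : Complex.normSq (r * s) < 1 := (ogd_abs_lt_one_iff_normSq _).mp h1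
    rw [hsq] at h2
    have hW := ogd_normSq_lt_of_abs_lt h2
    have hD : 0 < (1 - Complex.normSq r) * (1 - Complex.normSq s) *
        (Complex.normSq (r - s) + (1 - Complex.normSq r) * (1 - Complex.normSq s)) := by
      rw [← hkey]; linarith
    have hmul : Complex.normSq (r * s) = Complex.normSq r * Complex.normSq s :=
      Complex.normSq_mul r s
    rw [hmul] at hPQ
    have hsub : Complex.normSq (r - s) = Complex.normSq r + Complex.normSq s -
        2 * (r.re * s.re + r.im * s.im) := by
      simp only [Complex.normSq_apply, Complex.sub_re, Complex.sub_im]; ring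
    have hCS : (r.re * s.re + r.im * s.im) ^ 2 ≤ Complex.normSq r * Complex.normSq s := by
      simp only [Complex.normSq_apply]
      nlinarith [sq_nonneg (r.re * s.im - r.im * s.re)]
    have hP0 := Complex.normSq_nonneg r
    have hQ0 := Complex.normSq_nonneg s
    have hpos : 0 < 1 + Complex.normSq r * Complex.normSq s -
        2 * (r.re * s.re + r.im * s.im) := by
      nlinarith [sq_nonneg (1 - Complex.normSq r * Complex.normSq s)]
    have hD' : 0 < (1 - Complex.normSq r) * (1 - Complex.normSq s) *
        (1 + Complex.normSq r * Complex.normSq s - 2 * (r.re * s.re + r.im * s.im)) := by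
      have : Complex.normSq (r - s) + (1 - Complex.normSq r) * (1 - Complex.normSq s) =
          1 + Complex.normSq r * Complex.normSq s - 2 * (r.re * s.re + r.im * s.im) := by
        rw [hsub]; ring
      rw [this] at hD; exact hD
    have hPlt : Complex.normSq r < 1 := by
      by_contra h
      push_neg at h
      have hQlt : Complex.normSq s < 1 := by nlinarith
      have h4 : 0 < (1 - Complex.normSq s) *
          (1 + Complex.normSq r * Complex.normSq s - 2 * (r.re * s.re + r.im * s.im)) :=
        mul_pos (by linarith) hpos
      nlinarith [hD', h4]
    have hQlt : Complex.normSq s < 1 := by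
      by_contra h
      push_neg at h
      have h4 : 0 < (1 - Complex.normSq r) *
          (1 + Complex.normSq r * Complex.normSq s - 2 * (r.re * s.re + r.im * s.im)) :=
        mul_pos (by linarith) hpos
      nlinarith [hD', h4]
    exact ⟨(ogd_abs_lt_one_iff_normSq r).mpr hPlt, (ogd_abs_lt_one_iff_normSq s).mpr hQlt⟩

/-- Stability criterion for generalized optimistic gradient descent: all roots of
`x² − (1 + kλ)x + λ` lie in the open unit disk iff `|λ| < 1` and
`|λ|² (k − 3 + (k+1)|λ|²) < 2 Re(λ) (k|λ|² − 1)`. -/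
theorem ogd_characteristic_roots_in_unit_disk (k : ℝ) (hk : 1 < k) (lam : ℂ) :
    (∀ x : ℂ, x ^ 2 - (1 + (k : ℂ) * lam) * x + lam = 0 → ‖x‖ < 1) ↔
      (‖lam‖ < 1 ∧
        ‖lam‖ ^ 2 * (k - 3 + (k + 1) * ‖lam‖ ^ 2) <
          2 * lam.re * (k * ‖lam‖ ^ 2 - 1)) := by
  obtain ⟨d, hd⟩ : ∃ d : ℂ, d ^ 2 = (1 + (k : ℂ) * lam) ^ 2 - 4 * lam :=
    IsAlgClosed.exists_pow_nat_eq _ zero_lt_two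
  set b : ℂ := 1 + (k : ℂ) * lam with hb
  set r : ℂ := (b + d) / 2 with hr
  set s : ℂ := (b - d) / 2 with hs
  have hsum : r + s = b := by rw [hr, hs]; ring
  have hprod : r * s = lam := by rw [hr, hs]; linear_combination (-(1 : ℂ)/4) * hd
  have hroot : ∀ x : ℂ, x ^ 2 - b * x + lam = 0 ↔ (x = r ∨ x = s) := by
    intro x
    constructor
    · intro h
      have h0 : (x - r) * (x - s) = 0 := by linear_combination h - x * hsum + hprod
      rcases mul_eq_zero.mp h0 with h' | h'
      · exact Or.inl (sub_eq_zero.mp h')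
      · exact Or.inr (sub_eq_zero.mp h')
    · rintro (rfl | rfl)
      · linear_combination r * hsum - hprod
      · linear_combination s * hsum - hprod
  have step1 : (∀ x : ℂ, x ^ 2 - b * x + lam = 0 → ‖x‖ < 1) ↔
      (‖r‖ < 1 ∧ ‖s‖ < 1) := by
    constructor
    · intro h
      exact ⟨h r ((hroot r).mpr (Or.inl rfl)), h s ((hroot s).mpr (Or.inr rfl))⟩
    · rintro ⟨h1, h2⟩ x hx
      rcases (hroot x).mp hx with rfl | rfl
      · exact h1
      · exact h2
  rw [step1, ogd_both_roots_lt_one, hprod, hsum]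
  have hsq : ‖lam‖ ^ 2 = Complex.normSq lam := Complex.sq_norm _
  have hnw : Complex.normSq ((starRingEnd ℂ) b - (starRingEnd ℂ) lam * b) =
      (1 - k * (lam.re ^ 2 + lam.im ^ 2) + (k - 1) * lam.re) ^ 2 +
        (k - 1) ^ 2 * lam.im ^ 2 := by
    rw [hb]
    simp only [Complex.normSq_apply, Complex.mul_re, Complex.mul_im, Complex.add_re,
      Complex.add_im, Complex.sub_re, Complex.sub_im, Complex.conj_re, Complex.conj_im,
      Complex.one_re, Complex.one_im, Complex.ofReal_re, Complex.ofReal_im]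
    ring
  have hnsq : Complex.normSq lam = lam.re ^ 2 + lam.im ^ 2 := by
    simp only [Complex.normSq_apply]; ring
  set a : ℝ := lam.re
  set c : ℝ := lam.im
  have hid : ((1 - k * (a ^ 2 + c ^ 2) + (k - 1) * a) ^ 2 + (k - 1) ^ 2 * c ^ 2) -
      (1 - (a ^ 2 + c ^ 2)) ^ 2 =
      (k - 1) * ((a ^ 2 + c ^ 2) * (k - 3 + (k + 1) * (a ^ 2 + c ^ 2)) -
        2 * a * (k * (a ^ 2 + c ^ 2) - 1)) := by ring
  constructor
  · rintro ⟨h1, h2⟩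
    refine ⟨h1, ?_⟩
    rw [hsq] at h2 ⊢
    rw [hnsq] at h2 ⊢
    have hW := ogd_normSq_lt_of_abs_lt h2
    rw [hnw] at hW
    nlinarith [hid, hW, hk]
  · rintro ⟨h1, h2⟩
    refine ⟨h1, ?_⟩
    rw [hsq] at h2 ⊢
    rw [hnsq] at h2 ⊢
    have hRpos : (0 : ℝ) ≤ 1 - (a ^ 2 + c ^ 2) := by
      have := (ogd_abs_lt_one_iff_normSq lam).mp h1
      rw [hnsq] at this; linarith
    refine ogd_abs_lt_of_normSq_lt hRpos ?_
    rw [hnw]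
    nlinarith [hid, h2, hk]
end

section
/- Let A be a real symmetric positive semidefinite n×n matrix, B a real symmetric negative semidefinite m×m matrix, C any real n×m matrix, and α₁, α₂ > 0 real numbers. Consider the real (n+m)×(n+m) block matrix H with blocks H = [[−α₁·A, −α₁·C],[α₂·Cᵀ, α₂·B]]. Then every complex eigenvalue λ of H satisfies Re(λ) ≤ 0. Moreover, if A = 0 and B = 0 (the bilinear case), then every complex eigenvalue λ of H satisfies Re(λ) = 0. -/
open Matrix
open scoped ComplexOrder

lemma posSemidef_map_ofReal {k : ℕ} {M : Matrix (Fin k) (Fin k) ℝ} (hM : M.PosSemidef) :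
    (M.map Complex.ofReal).PosSemidef := by
  obtain ⟨L, rfl⟩ : ∃ L : Matrix (Fin k) (Fin k) ℝ, M = Lᴴ * L := by
    open scoped MatrixOrder in
    exact CStarAlgebra.nonneg_iff_eq_star_mul_self.mp hM.nonneg
  have h1 : (Lᴴ * L).map Complex.ofReal = (L.map Complex.ofReal)ᴴ * (L.map Complex.ofReal) := by
    ext i j
    simp [Matrix.mul_apply, Matrix.conjTranspose_apply, Complex.conj_ofReal]
  rw [h1]
  exact Matrix.posSemidef_conjTranspose_mul_self _

lemma exists_eigvec {k : Type*} [Fintype k] [DecidableEq k] {M : Matrix k k ℂ} {μ : ℂ}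
    (h : μ ∈ spectrum ℂ M) : ∃ v : k → ℂ, v ≠ 0 ∧ M *ᵥ v = μ • v := by
  rw [spectrum.mem_iff] at h
  rw [Matrix.isUnit_iff_isUnit_det, isUnit_iff_ne_zero, not_not] at h
  obtain ⟨v, hv0, hv⟩ := (Matrix.exists_mulVec_eq_zero_iff).mpr h
  refine ⟨v, hv0, ?_⟩
  have : (algebraMap ℂ (Matrix k k ℂ)) μ = μ • 1 := by
    simp [Algebra.algebraMap_eq_smul_one]
  rw [this, sub_mulVec, smul_mulVec, one_mulVec, sub_eq_zero] at hv
  exact hv.symm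

lemma conj_dot {p q : ℕ} (M : Matrix (Fin p) (Fin q) ℂ) (x : Fin p → ℂ) (y : Fin q → ℂ) :
    star (star x ⬝ᵥ (M *ᵥ y)) = star y ⬝ᵥ (Mᴴ *ᵥ x) := by
  rw [star_dotProduct, star_star, Matrix.dotProduct_mulVec, Matrix.star_mulVec,
    ← Matrix.dotProduct_mulVec]

lemma dot_self_real {p : ℕ} (x : Fin p → ℂ) :
    star x ⬝ᵥ x = ((∑ i, Complex.normSq (x i) : ℝ) : ℂ) := by
  simp [dotProduct, Complex.normSq_eq_conj_mul_self]

set_option maxHeartbeats 1000000 in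
lemma key {n m : ℕ}
    (A : Matrix (Fin n) (Fin n) ℝ) (B : Matrix (Fin m) (Fin m) ℝ)
    (C : Matrix (Fin n) (Fin m) ℝ)
    (hA : A.PosSemidef) (hB : (-B).PosSemidef)
    (α₁ α₂ : ℝ) (hα₁ : 0 < α₁) (hα₂ : 0 < α₂) :
    ∀ lam ∈ spectrum ℂ
        ((Matrix.fromBlocks ((-α₁) • A) ((-α₁) • C) (α₂ • Cᵀ) (α₂ • B)).map
          (Complex.ofReal)),
      ∃ qa qb S : ℝ, 0 ≤ qa ∧ qb ≤ 0 ∧ 0 < S ∧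
        lam.re * S = α₁ * α₂ * (qb - qa) ∧ (A = 0 → qa = 0) ∧ (B = 0 → qb = 0) := by
  intro lam hlam
  obtain ⟨v, hv0, hv⟩ := exists_eigvec hlam
  set Ac := A.map Complex.ofReal with hAc
  set Bc := B.map Complex.ofReal with hBc
  set Cc := C.map Complex.ofReal with hCc
  set Ctc := Cᵀ.map Complex.ofReal with hCtc
  have hblock : (Matrix.fromBlocks ((-α₁) • A) ((-α₁) • C) (α₂ • Cᵀ) (α₂ • B)).map
      (Complex.ofReal) =
      Matrix.fromBlocks (((-α₁ : ℝ) : ℂ) • Ac) (((-α₁ : ℝ) : ℂ) • Cc)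
        (((α₂ : ℝ) : ℂ) • Ctc) (((α₂ : ℝ) : ℂ) • Bc) := by
    ext i j
    rcases i with i | i <;> rcases j with j | j <;>
      simp [hAc, hBc, hCc, hCtc, Matrix.fromBlocks]
  rw [hblock] at hv
  set x : Fin n → ℂ := v ∘ Sum.inl with hx
  set y : Fin m → ℂ := v ∘ Sum.inr with hy
  rw [Matrix.fromBlocks_mulVec] at hv
  have hv1 : (((-α₁ : ℝ) : ℂ) • Ac) *ᵥ x + (((-α₁ : ℝ) : ℂ) • Cc) *ᵥ y = lam • x := by
    funext i; have := congrFun hv (Sum.inl i)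
    simp only [sumElim_dotProduct_sumElim, Sum.elim_inl, ← hx, ← hy, Pi.add_apply,
      Pi.smul_apply, smul_eq_mul] at this; exact this
  have hv2 : (((α₂ : ℝ) : ℂ) • Ctc) *ᵥ x + (((α₂ : ℝ) : ℂ) • Bc) *ᵥ y = lam • y := by
    funext i; have := congrFun hv (Sum.inr i)
    simp only [Sum.elim_inr, ← hx, ← hy, Pi.add_apply, Pi.smul_apply, smul_eq_mul] at this; exact this
  set a := star x ⬝ᵥ (Ac *ᵥ x) with ha
  set b := star y ⬝ᵥ (Bc *ᵥ y) with hb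
  set c := star x ⬝ᵥ (Cc *ᵥ y) with hc
  set c' := star y ⬝ᵥ (Ctc *ᵥ x) with hc'
  have eq1 : lam * (star x ⬝ᵥ x) = ((-α₁ : ℝ) : ℂ) * a + ((-α₁ : ℝ) : ℂ) * c := by
    have := congrArg (fun w => star x ⬝ᵥ w) hv1
    simpa [dotProduct_add, dotProduct_smul, Matrix.smul_mulVec,
      Matrix.neg_mulVec, dotProduct_neg, neg_smul,
      smul_eq_mul, ha, hc, eq_comm] using this
  have eq2 : lam * (star y ⬝ᵥ y) = ((α₂ : ℝ) : ℂ) * c' + ((α₂ : ℝ) : ℂ) * b := by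
    have := congrArg (fun w => star y ⬝ᵥ w) hv2
    simpa [dotProduct_add, dotProduct_smul, Matrix.smul_mulVec,
      Matrix.neg_mulVec, dotProduct_neg, neg_smul,
      smul_eq_mul, hb, hc', eq_comm] using this
  -- c' = conj c
  have hCH : Ccᴴ = Ctc := by
    ext i j; simp [hCc, hCtc, Complex.conj_ofReal]
  have hcc : c' = star c := by
    rw [hc', ← hCH, ← conj_dot, hc]
  -- a is nonneg real
  have hA' := (posSemidef_map_ofReal hA).dotProduct_mulVec_nonneg x
  have haim : a.im = 0 := by
    have := (Complex.le_def.mp hA').2; simpa [ha] using this.symm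
  have hare : 0 ≤ a.re := by
    have := (Complex.le_def.mp hA').1; simpa [ha] using this
  have hB' := (posSemidef_map_ofReal hB).dotProduct_mulVec_nonneg y
  have hnegB : (-B).map Complex.ofReal = -Bc := by ext i j; simp [hBc]
  rw [hnegB] at hB'
  have hbim : b.im = 0 := by
    have := (Complex.le_def.mp hB').2
    simpa [hb, Matrix.neg_mulVec] using this.symm
  have hbre : b.re ≤ 0 := by
    have := (Complex.le_def.mp hB').1
    simp only [Matrix.neg_mulVec, dotProduct_neg, Complex.neg_re, Complex.zero_re] at this
    linarith [this]
  -- sums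
  set Sx := ∑ i, Complex.normSq (x i) with hSx
  set Sy := ∑ i, Complex.normSq (y i) with hSy
  have hSx0 : 0 ≤ Sx := Finset.sum_nonneg fun i _ => Complex.normSq_nonneg _
  have hSy0 : 0 ≤ Sy := Finset.sum_nonneg fun i _ => Complex.normSq_nonneg _
  have hSpos : 0 < Sx + Sy := by
    rcases Function.ne_iff.mp hv0 with ⟨j, hj⟩
    have : 0 < Sx ∨ 0 < Sy := by
      cases j with
      | inl i =>
        left
        exact Finset.sum_pos' (fun i _ => Complex.normSq_nonneg _)
          ⟨i, Finset.mem_univ _, by simpa [hx, Complex.normSq_pos] using hj⟩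
      | inr i =>
        right
        exact Finset.sum_pos' (fun i _ => Complex.normSq_nonneg _)
          ⟨i, Finset.mem_univ _, by simpa [hy, Complex.normSq_pos] using hj⟩
    rcases this with h | h <;> linarith
  rw [dot_self_real] at eq1 eq2
  -- take real parts
  have r1 : lam.re * Sx = -α₁ * (a.re + c.re) := by
    have := congrArg Complex.re eq1
    simp only [Complex.mul_re, Complex.ofReal_re, Complex.ofReal_im, Complex.add_re,
      mul_zero, zero_mul, sub_zero, Complex.neg_re] at this
    rw [this]; ring
  have r2 : lam.re * Sy = α₂ * (c.re + b.re) := by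
    have := congrArg Complex.re eq2
    simp only [Complex.mul_re, Complex.ofReal_re, Complex.ofReal_im, Complex.add_re,
      mul_zero, zero_mul, sub_zero, hcc, RCLike.star_def, Complex.conj_re] at this
    rw [this]; ring
  refine ⟨a.re, b.re, α₂ * Sx + α₁ * Sy, hare, hbre, ?_, ?_, ?_, ?_⟩
  · -- positivity of S
    rcases lt_or_ge 0 Sx with h | h
    · have : 0 < α₂ * Sx := mul_pos hα₂ h
      nlinarith [mul_nonneg hα₁.le hSy0]
    · have hSx' : Sx = 0 := le_antisymm h hSx0
      have : 0 < Sy := by rw [hSx'] at hSpos; linarith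
      nlinarith [mul_nonneg hα₂.le hSx0, mul_pos hα₁ this]
  · nlinarith [r1, r2]
  · intro hA0
    have : Ac = 0 := by rw [hAc, hA0]; ext i j; simp
    simp [ha, this]
  · intro hB0
    have : Bc = 0 := by rw [hBc, hB0]; ext i j; simp
    simp [hb, this]


/-- At a local saddle point, the spectrum of the two-time-scale GDA Jacobian
`H = [[−α₁A, −α₁C], [α₂Cᵀ, α₂B]]` (with `A ⪰ 0`, `B ⪯ 0`) lies in the closed left
half-plane; in the bilinear case (`A = 0`, `B = 0`) it lies on the imaginary axis. -/
theorem gda_jacobian_spectrum_left_halfPlane {n m : ℕ}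
    (A : Matrix (Fin n) (Fin n) ℝ) (B : Matrix (Fin m) (Fin m) ℝ)
    (C : Matrix (Fin n) (Fin m) ℝ)
    (hA : A.PosSemidef) (hB : Matrix.NegSemidef' B)
    (α₁ α₂ : ℝ) (hα₁ : 0 < α₁) (hα₂ : 0 < α₂) :
    (∀ lam ∈ spectrum ℂ
        ((Matrix.fromBlocks ((-α₁) • A) ((-α₁) • C) (α₂ • Cᵀ) (α₂ • B)).map
          (Complex.ofReal)),
      lam.re ≤ 0) ∧
    (A = 0 → B = 0 →
      ∀ lam ∈ spectrum ℂ
          ((Matrix.fromBlocks ((-α₁) • A) ((-α₁) • C) (α₂ • Cᵀ) (α₂ • B)).map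
            (Complex.ofReal)),
        lam.re = 0) := by
  constructor
  · intro lam hlam
    obtain ⟨qa, qb, S, hqa, hqb, hS, heq, -, -⟩ := key A B C hA hB α₁ α₂ hα₁ hα₂ lam hlam
    nlinarith [mul_pos hα₁ hα₂]
  · intro hA0 hB0 lam hlam
    obtain ⟨qa, qb, S, hqa, hqb, hS, heq, h1, h2⟩ := key A B C hA hB α₁ α₂ hα₁ hα₂ lam hlam
    have : lam.re * S = 0 := by rw [heq, h1 hA0, h2 hB0]; ring
    exact (mul_eq_zero.mp this).resolve_right (ne_of_gt hS)
end
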